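/- If x is a feasible solution of SMKP and y is the corresponding solution of M-SP defined by y^h_{w,q} = Σ_{j∈B_w: g(j)=q} (d_q/f_w) Σ_{i=1}^{m} x^h_{i,j}, then y is feasible for M-SP and the total profit satisfies p(y) = v(x), where v_j = p_w d_{g(j)}/f_w for j ∈ B_w (from the maximal block partition). -/
import Mathlib


open Finset

/-- Feasibility for SMKP. -/
def smkFeasible (n m l : ℕ) (s bnd : ℕ → ℕ) (g : ℕ → ℕ) (r : ℕ → ℕ → ℕ)
    (x : ℕ → ℕ → ℕ → ℕ) : Prop :=
  (∀ i ∈ Icc 1 m, ∀ h ∈ Icc 1 l,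
    ∑ j ∈ (Icc 1 n).filter (fun j => g j ≤ h), s j * x i j h ≤ r i h) ∧
  (∀ j ∈ Icc 1 n, ∑ i ∈ Icc 1 m, ∑ h ∈ Icc (g j) l, x i j h ≤ bnd j)

/-- Feasibility for M-SP. -/
def mspFeasible (t l : ℕ) (f d cbar : ℕ → ℕ) (bt : ℕ → ℕ → ℕ)
    (y : ℕ → ℕ → ℕ → ℕ) : Prop :=
  (∀ h ∈ Icc 1 l,
    ∑ w ∈ Icc 1 t, ∑ q ∈ Icc 1 h, ((f w * y w q h + d q - 1) / d q) * d q ≤ cbar h) ∧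
  (∀ w ∈ Icc 1 t, ∀ q ∈ Icc 1 l,
    ∑ h ∈ Icc q l, (f w * y w q h + d q - 1) / d q ≤ f w * bt w q / d q)

/-- The canonical map from SMKP solutions to M-SP solutions. -/
def ymap (n m : ℕ) (d f : ℕ → ℕ) (g blk : ℕ → ℕ) (x : ℕ → ℕ → ℕ → ℕ)
    (w q h : ℕ) : ℕ :=
  ∑ j ∈ (Icc 1 n).filter (fun j => blk j = w ∧ g j = q),
    (d q / f w) * ∑ i ∈ Icc 1 m, x i j h

lemma ceil_exact (dq A : ℕ) (hdq : 0 < dq) : (dq * A + dq - 1) / dq = A := by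
  have h : dq * A + dq - 1 = dq * A + (dq - 1) := by omega
  rw [h, Nat.mul_add_div hdq, Nat.div_eq_of_lt (by omega), Nat.add_zero]

lemma collapse {M : Type*} [AddCommMonoid M] (n t h : ℕ) (blk g : ℕ → ℕ)
    (hb : ∀ j ∈ Icc 1 n, blk j ∈ Icc 1 t ∧ 1 ≤ g j) (F : ℕ → M) :
    ∑ w ∈ Icc 1 t, ∑ q ∈ Icc 1 h,
      ∑ j ∈ (Icc 1 n).filter (fun j => blk j = w ∧ g j = q), F j
    = ∑ j ∈ (Icc 1 n).filter (fun j => g j ≤ h), F j := by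
  simp only [Finset.sum_filter]
  conv_lhs => enter [2,w]; rw [Finset.sum_comm]
  rw [Finset.sum_comm]
  refine Finset.sum_congr rfl fun j hj => ?_
  obtain ⟨hbl, hg1⟩ := hb j hj
  rw [Finset.sum_eq_single (blk j)
    (fun w _ hw => Finset.sum_eq_zero fun q _ => by
      rw [if_neg]; exact fun hh => hw hh.1.symm)
    (fun hc => absurd hbl hc)]
  simp only [true_and]
  rw [Finset.sum_ite_eq]
  simp only [mem_Icc]
  by_cases hc : g j ≤ h
  · simp [hc, hg1]
  · simp [hc]

/-- Correspondence: the image of a feasible SMKP solution `x` is feasible for M-SP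
(with a single knapsack of part-capacities `c̄ h = Σ_i r i h`) and preserves the value,
where `v j = p (blk j) * d (g j) / f (blk j)`. -/
theorem smkp_to_msp_feasible_and_value
    (n m l t : ℕ) (s bnd : ℕ → ℕ) (g blk : ℕ → ℕ) (r : ℕ → ℕ → ℕ)
    (f d : ℕ → ℕ) (bt : ℕ → ℕ → ℕ) (p : ℕ → ℚ) (x : ℕ → ℕ → ℕ → ℕ)
    (hd1 : d 1 = 1)
    (hchain : ∀ q, 1 ≤ q → q < l → d q ∣ d (q + 1) ∧ d q < d (q + 1))
    (hdpos : ∀ q ∈ Icc 1 l, 0 < d q)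
    (hfpos : ∀ w ∈ Icc 1 t, 0 < f w)
    (hblk : ∀ j ∈ Icc 1 n, blk j ∈ Icc 1 t ∧ g j ∈ Icc 1 l ∧ s j = d (g j))
    (hfdvd : ∀ j ∈ Icc 1 n, f (blk j) ∣ d (g j))
    (hr : ∀ i ∈ Icc 1 m, ∀ h ∈ Icc 1 l, d h ∣ r i h)
    (hbt : ∀ w ∈ Icc 1 t, ∀ q ∈ Icc 1 l,
      f w * bt w q = d q * ∑ j ∈ (Icc 1 n).filter (fun j => blk j = w ∧ g j = q), bnd j)
    (hx : smkFeasible n m l s bnd g r x) :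
    mspFeasible t l f d (fun h => ∑ i ∈ Icc 1 m, r i h) bt
      (ymap n m d f g blk x) ∧
    (∑ h ∈ Icc 1 l, ∑ w ∈ Icc 1 t, ∑ q ∈ Icc 1 h,
        p w * ((ymap n m d f g blk x) w q h : ℚ)) =
      ∑ i ∈ Icc 1 m, ∑ j ∈ Icc 1 n, ∑ h ∈ Icc (g j) l,
        (p (blk j) * (d (g j) : ℚ) / (f (blk j) : ℚ)) * (x i j h : ℚ) := by
  have hb : ∀ j ∈ Icc 1 n, blk j ∈ Icc 1 t ∧ 1 ≤ g j := fun j hj =>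
    ⟨(hblk j hj).1, (mem_Icc.mp (hblk j hj).2.1).1⟩
  -- key ceiling identity
  have hmul : ∀ w ∈ Icc 1 t, ∀ q ∈ Icc 1 l, ∀ h,
      f w * ymap n m d f g blk x w q h
        = d q * ∑ j ∈ (Icc 1 n).filter (fun j => blk j = w ∧ g j = q),
            ∑ i ∈ Icc 1 m, x i j h := by
    intro w hw q hq h
    unfold ymap
    rw [Finset.mul_sum, Finset.mul_sum]
    refine Finset.sum_congr rfl fun j hj => ?_
    simp only [mem_filter] at hj
    have hdvd : f w ∣ d q := by
      have := hfdvd j hj.1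
      rwa [hj.2.1, hj.2.2] at this
    rw [← mul_assoc, Nat.mul_div_cancel' hdvd]
  have key : ∀ w ∈ Icc 1 t, ∀ q ∈ Icc 1 l, ∀ h,
      (f w * ymap n m d f g blk x w q h + d q - 1) / d q
        = ∑ j ∈ (Icc 1 n).filter (fun j => blk j = w ∧ g j = q),
            ∑ i ∈ Icc 1 m, x i j h := by
    intro w hw q hq h
    rw [hmul w hw q hq h, ceil_exact _ _ (hdpos q hq)]
  refine ⟨⟨?_, ?_⟩, ?_⟩
  · -- capacity constraint
    intro h hh
    have hh' := mem_Icc.mp hh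
    calc ∑ w ∈ Icc 1 t, ∑ q ∈ Icc 1 h,
          ((f w * ymap n m d f g blk x w q h + d q - 1) / d q) * d q
        = ∑ w ∈ Icc 1 t, ∑ q ∈ Icc 1 h,
            ∑ j ∈ (Icc 1 n).filter (fun j => blk j = w ∧ g j = q),
              s j * ∑ i ∈ Icc 1 m, x i j h := by
          refine Finset.sum_congr rfl fun w hw => Finset.sum_congr rfl fun q hq => ?_
          have hq' : q ∈ Icc 1 l := by
            simp only [mem_Icc] at hq ⊢; omega
          rw [key w hw q hq' h, Finset.sum_mul]
          refine Finset.sum_congr rfl fun j hj => ?_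
          simp only [mem_filter] at hj
          rw [(hblk j hj.1).2.2, hj.2.2, mul_comm]
      _ = ∑ j ∈ (Icc 1 n).filter (fun j => g j ≤ h),
            s j * ∑ i ∈ Icc 1 m, x i j h := collapse n t h blk g hb _
      _ = ∑ i ∈ Icc 1 m, ∑ j ∈ (Icc 1 n).filter (fun j => g j ≤ h),
            s j * x i j h := by
          rw [Finset.sum_comm]
          exact Finset.sum_congr rfl fun j _ => Finset.mul_sum _ _ _
      _ ≤ ∑ i ∈ Icc 1 m, r i h :=
          Finset.sum_le_sum fun i hi => hx.1 i hi h hh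
  · -- multiplicity constraint
    intro w hw q hq
    rw [hbt w hw q hq, Nat.mul_div_cancel_left _ (hdpos q hq)]
    calc ∑ h ∈ Icc q l, (f w * ymap n m d f g blk x w q h + d q - 1) / d q
        = ∑ h ∈ Icc q l, ∑ j ∈ (Icc 1 n).filter (fun j => blk j = w ∧ g j = q),
            ∑ i ∈ Icc 1 m, x i j h :=
          Finset.sum_congr rfl fun h _ => key w hw q hq h
      _ = ∑ j ∈ (Icc 1 n).filter (fun j => blk j = w ∧ g j = q),
            ∑ i ∈ Icc 1 m, ∑ h ∈ Icc q l, x i j h := by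
          rw [Finset.sum_comm]
          exact Finset.sum_congr rfl fun j _ => Finset.sum_comm
      _ ≤ ∑ j ∈ (Icc 1 n).filter (fun j => blk j = w ∧ g j = q), bnd j := by
          refine Finset.sum_le_sum fun j hj => ?_
          simp only [mem_filter] at hj
          have := hx.2 j hj.1
          rwa [hj.2.2] at this
  · -- value
    calc ∑ h ∈ Icc 1 l, ∑ w ∈ Icc 1 t, ∑ q ∈ Icc 1 h,
          p w * ((ymap n m d f g blk x) w q h : ℚ)
        = ∑ h ∈ Icc 1 l, ∑ w ∈ Icc 1 t, ∑ q ∈ Icc 1 h,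
            ∑ j ∈ (Icc 1 n).filter (fun j => blk j = w ∧ g j = q),
              (p (blk j) * (d (g j) : ℚ) / (f (blk j) : ℚ))
                * ∑ i ∈ Icc 1 m, (x i j h : ℚ) := by
          refine Finset.sum_congr rfl fun h _ => Finset.sum_congr rfl fun w hw =>
            Finset.sum_congr rfl fun q hq => ?_
          unfold ymap
          push_cast
          rw [Finset.mul_sum]
          refine Finset.sum_congr rfl fun j hj => ?_
          simp only [mem_filter] at hj
          have hdvd : f w ∣ d q := by
            have := hfdvd j hj.1
            rwa [hj.2.1, hj.2.2] at this
          have hf0 : (f w : ℚ) ≠ 0 := by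
            exact_mod_cast (hfpos w hw).ne'
          rw [Nat.cast_div hdvd hf0, hj.2.1, hj.2.2]
          ring
      _ = ∑ h ∈ Icc 1 l, ∑ j ∈ (Icc 1 n).filter (fun j => g j ≤ h),
            (p (blk j) * (d (g j) : ℚ) / (f (blk j) : ℚ))
              * ∑ i ∈ Icc 1 m, (x i j h : ℚ) :=
          Finset.sum_congr rfl fun h _ => collapse n t h blk g hb _
      _ = ∑ j ∈ Icc 1 n, ∑ h ∈ Icc (g j) l,
            (p (blk j) * (d (g j) : ℚ) / (f (blk j) : ℚ))
              * ∑ i ∈ Icc 1 m, (x i j h : ℚ) := by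
          simp only [Finset.sum_filter]
          rw [Finset.sum_comm]
          refine Finset.sum_congr rfl fun j hj => ?_
          have hg1 := (hb j hj).2
          rw [← Finset.sum_filter]
          congr 1
          ext h
          simp only [mem_filter, mem_Icc]
          omega
      _ = ∑ i ∈ Icc 1 m, ∑ j ∈ Icc 1 n, ∑ h ∈ Icc (g j) l,
            (p (blk j) * (d (g j) : ℚ) / (f (blk j) : ℚ)) * (x i j h : ℚ) := by
          rw [Finset.sum_comm]
          refine Finset.sum_congr rfl fun j _ => ?_
          rw [Finset.sum_comm]
          exact Finset.sum_congr rfl fun h _ => Finset.mul_sum _ _ _
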